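/- Let G be a connected simple graph on 13 vertices with minimum degree at least 6. If G has a cut vertex, i.e., a vertex v such that G − v is disconnected, then G contains K7 (the complete graph on seven vertices) as a subgraph; in particular, G contains K6 as a minor. -/

import Mathlib

open SimpleGraph

/-- `H` is a minor of `G`: there is an assignment of (some) vertices of `G` to
branch sets, one nonempty connected branch set for each vertex of `H`, such that
every edge of `H` is realized by an edge of `G` between the corresponding branch sets. -/
def IsMinor {V W : Type} (H : SimpleGraph W) (G : SimpleGraph V) : Prop :=
  ∃ f : V → Option W,
    (∀ w : W, ∃ v, f v = some w) ∧
    (∀ w : W, (G.induce {v | f v = some w}).Connected) ∧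
    (∀ w₁ w₂ : W, H.Adj w₁ w₂ →
      ∃ v₁ v₂, f v₁ = some w₁ ∧ f v₂ = some w₂ ∧ G.Adj v₁ v₂)

/-- Planarity via Wagner's theorem: no `K₅` minor and no `K₃,₃` minor. -/
def IsPlanar {V : Type} (G : SimpleGraph V) : Prop :=
  ¬ IsMinor (completeGraph (Fin 5)) G ∧
    ¬ IsMinor (completeBipartiteGraph (Fin 3) (Fin 3)) G

/-- A graph is apex if deleting some vertex leaves a planar graph. -/
def IsApex {V : Type} (G : SimpleGraph V) : Prop :=
  ∃ v : V, IsPlanar (G.induce {u | u ≠ v})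

/-- Minor minimal non-apex: not apex, but every proper minor is apex. -/
def IsMMNA {V : Type} (G : SimpleGraph V) : Prop :=
  ¬ IsApex G ∧
    ∀ (W : Type) (H : SimpleGraph W), IsMinor H G → ¬ IsMinor G H → IsApex H

/-- The degree of a vertex, as the cardinality of its neighbor set. -/
noncomputable def vdeg {V : Type} (G : SimpleGraph V) (v : V) : ℕ :=
  (G.neighborSet v).ncard

/-- Edge list of the icosahedral graph on 12 vertices. -/
def icList : List (Fin 12 × Fin 12) :=
  [(0,1),(0,2),(0,3),(0,4),(0,5),
   (1,2),(2,3),(3,4),(4,5),(5,1),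
   (11,6),(11,7),(11,8),(11,9),(11,10),
   (6,7),(7,8),(8,9),(9,10),(10,6),
   (1,6),(1,7),(2,7),(2,8),(3,8),(3,9),(4,9),(4,10),(5,10),(5,6)]

/-- The icosahedral graph `Ic`. -/
def Ic : SimpleGraph (Fin 12) := SimpleGraph.fromRel (fun a b => (a, b) ∈ icList)

/-- The join `K₁ ∗ Ic`: a cone over the icosahedral graph. -/
def ConeIc : SimpleGraph (Unit ⊕ Fin 12) :=
  SimpleGraph.fromRel (fun a b =>
    a = Sum.inl () ∨ b = Sum.inl () ∨ ∃ x y, a = Sum.inr x ∧ b = Sum.inr y ∧ Ic.Adj x y)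
theorem stmt_13 (G : SimpleGraph (Fin 13)) (hconn : G.Connected)
    (hdeg : ∀ v, 6 ≤ vdeg G v)
    (v : Fin 13) (hcut : ¬ (G.induce {u | u ≠ v}).Connected) :
    Nonempty (completeGraph (Fin 7) ↪g G) ∧ IsMinor (completeGraph (Fin 6)) G := by
  classical
  set S : Set (Fin 13) := {u | u ≠ v} with hS
  set H : SimpleGraph ↥S := G.induce S with hH
  -- H is nonempty
  obtain ⟨u0, hu0⟩ := exists_ne v
  haveI : Nonempty ↥S := ⟨⟨u0, hu0⟩⟩
  -- each vertex of H has at least 5 neighbors in H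
  have hnb : ∀ x : ↥S, 5 ≤ (H.neighborSet x).ncard := by
    intro x
    have h1 : G.neighborSet x.1 ⊆ insert v (Subtype.val '' H.neighborSet x) := by
      intro w hw
      by_cases hwv : w = v
      · exact hwv ▸ Set.mem_insert _ _
      · refine Set.mem_insert_of_mem _ ⟨⟨w, hwv⟩, ?_, rfl⟩
        exact hw
    have h2 : (G.neighborSet x.1).ncard ≤ (Subtype.val '' H.neighborSet x).ncard + 1 :=
      le_trans (Set.ncard_le_ncard h1 (Set.toFinite _)) (Set.ncard_insert_le _ _)
    have h3 := hdeg x.1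
    rw [vdeg] at h3
    rw [Set.ncard_image_of_injective _ Subtype.val_injective] at h2
    omega
  -- get two non-reachable vertices
  rw [connected_iff] at hcut
  push_neg at hcut
  have hpre : ¬ H.Preconnected := fun h => not_isEmpty_of_nonempty _ (hcut h)
  rw [SimpleGraph.Preconnected] at hpre
  push_neg at hpre
  obtain ⟨a, b, hab⟩ := hpre
  set Ra : Set ↥S := {y | H.Reachable a y} with hRa
  set Rb : Set ↥S := {y | H.Reachable b y} with hRb
  -- reachability sets are closed under neighbors and have ≥ 6 elements
  have hclosed : ∀ (c : ↥S) (x : ↥S), x ∈ {y | H.Reachable c y} →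
      H.neighborSet x ⊆ {y | H.Reachable c y} \ {x} := by
    intro c x hx y hy
    refine ⟨hx.trans (Adj.reachable (G := H) hy), ?_⟩
    intro he
    rw [Set.mem_singleton_iff] at he
    exact H.irrefl (he ▸ hy)
  have hbig : ∀ c : ↥S, 6 ≤ ({y | H.Reachable c y} : Set ↥S).ncard := by
    intro c
    have h1 : insert c (H.neighborSet c) ⊆ {y | H.Reachable c y} := by
      intro y hy
      rcases hy with rfl | hy
      · exact SimpleGraph.Reachable.refl _
      · exact Adj.reachable (G := H) hy
    have h2 : (insert c (H.neighborSet c)).ncard = (H.neighborSet c).ncard + 1 :=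
      Set.ncard_insert_of_notMem (fun h => H.irrefl h) (Set.toFinite _)
    have h3 := Set.ncard_le_ncard h1 (Set.toFinite _)
    have := hnb c
    omega
  have hdisj : Ra ∩ Rb = ∅ := by
    ext y
    simp only [Set.mem_inter_iff, Set.mem_empty_iff_false, iff_false, not_and]
    intro h1 h2
    exact hab (h1.trans h2.symm)
  have hcard12 : (Set.univ : Set ↥S).ncard = 12 := by
    rw [Set.ncard_univ, Nat.card_eq_fintype_card]
    simp [hS, Fintype.card_subtype_compl, Finset.filter_ne']
  have hsum : Ra.ncard + Rb.ncard ≤ 12 := by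
    rw [← Set.ncard_union_eq (Set.disjoint_iff_inter_eq_empty.2 hdisj) (Set.toFinite _) (Set.toFinite _), ← hcard12]
    exact Set.ncard_le_ncard (Set.subset_univ _) (Set.toFinite _)
  have ha6 : 6 ≤ Ra.ncard := hbig a
  have hb6 : 6 ≤ Rb.ncard := hbig b
  have hRa6 : Ra.ncard = 6 := by omega
  -- every vertex of Ra is adjacent to everything else in Ra
  have hnbeq : ∀ x, x ∈ Ra → H.neighborSet x = Ra \ {x} := by
    intro x hx
    refine Set.eq_of_subset_of_ncard_le (hclosed a x hx) ?_ (Set.toFinite _)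
    rw [Set.ncard_diff_singleton_of_mem hx, hRa6]
    exact hnb x
  have hadjRa : ∀ x y, x ∈ Ra → y ∈ Ra → x ≠ y → G.Adj x.1 y.1 := by
    intro x y hx hy hxy
    have : y ∈ H.neighborSet x := by
      rw [hnbeq x hx]
      exact ⟨hy, fun h => hxy (Set.mem_singleton_iff.1 h).symm⟩
    exact this
  -- every vertex of Ra is adjacent to v
  have hadjv : ∀ x, x ∈ Ra → G.Adj v x.1 := by
    intro x hx
    by_contra hvx
    have h1 : G.neighborSet x.1 ⊆ Subtype.val '' H.neighborSet x := by
      intro w hw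
      by_cases hwv : w = v
      · exact absurd (hwv ▸ hw) (fun h => hvx h.symm)
      · exact ⟨⟨w, hwv⟩, hw, rfl⟩
    have h2 := Set.ncard_le_ncard h1 (Set.toFinite _)
    rw [Set.ncard_image_of_injective _ Subtype.val_injective, hnbeq x hx,
      Set.ncard_diff_singleton_of_mem hx, hRa6] at h2
    have h3 := hdeg x.1
    rw [vdeg] at h3
    omega
  -- an equiv Fin 6 ≃ Ra
  haveI : Fintype ↥Ra := (Set.toFinite Ra).fintype
  have hcard : Fintype.card ↥Ra = 6 := by
    rw [← Nat.card_eq_fintype_card, Nat.card_coe_set_eq, hRa6]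
  let e : ↥Ra ≃ Fin 6 := Fintype.equivFinOfCardEq hcard
  let g6 : Fin 6 → Fin 13 := fun i => ((e.symm i : ↥Ra) : ↥S).1
  have hg6mem : ∀ i, ((e.symm i : ↥Ra) : ↥S) ∈ Ra := fun i => (e.symm i).2
  have hg6ne : ∀ i, g6 i ≠ v := fun i => ((e.symm i : ↥Ra) : ↥S).2
  have hg6inj : Function.Injective g6 := by
    intro i j h
    have : (e.symm i : ↥Ra) = (e.symm j : ↥Ra) := Subtype.ext (Subtype.ext h)
    simpa using e.symm.injective this
  have hg6adj : ∀ i j, i ≠ j → G.Adj (g6 i) (g6 j) := by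
    intro i j hij
    refine hadjRa _ _ (hg6mem i) (hg6mem j) ?_
    intro h
    exact hij (e.symm.injective (Subtype.ext h))
  have hg6adjv : ∀ i, G.Adj v (g6 i) := fun i => hadjv _ (hg6mem i)
  constructor
  · -- K7 embedding
    let g : Fin 7 → Fin 13 := fun i => if h : (i : ℕ) < 6 then g6 ⟨i, h⟩ else v
    have hadj : ∀ i j : Fin 7, i ≠ j → G.Adj (g i) (g j) := by
      intro i j hij
      simp only [g]
      by_cases hi : (i : ℕ) < 6 <;> by_cases hj : (j : ℕ) < 6 <;>
        simp only [hi, hj, dif_pos, dif_neg, not_false_iff]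
      · exact hg6adj _ _ (fun h => hij (Fin.ext (by simpa using congrArg Fin.val h)))
      · exact (hg6adjv ⟨i, hi⟩).symm
      · exact hg6adjv ⟨j, hj⟩
      · exact absurd (Fin.ext (by omega)) hij
    have hginj : Function.Injective g := by
      intro i j h
      by_contra hij
      exact G.irrefl (h ▸ hadj i j hij)
    refine ⟨⟨⟨g, hginj⟩, ?_⟩⟩
    intro i j
    simp only [completeGraph, top_adj, Function.Embedding.coeFn_mk]
    constructor
    · intro h hij
      exact G.irrefl (hij ▸ h)
    · exact hadj i j
  · -- K6 minor
    refine ⟨Function.partialInv g6, ?_, ?_, ?_⟩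
    · intro w
      exact ⟨g6 w, Function.partialInv_left hg6inj w⟩
    · intro w
      have hset : {u | Function.partialInv g6 u = some w} = {g6 w} := by
        ext u
        simp only [Set.mem_setOf_eq, Set.mem_singleton_iff]
        rw [Function.partialInv_of_injective hg6inj w u]
        exact ⟨fun h => h.symm, fun h => h.symm⟩
      rw [hset, connected_iff]
      refine ⟨?_, ⟨⟨g6 w, rfl⟩⟩⟩
      intro x y
      have hx : x.1 = g6 w := x.2
      have hy : y.1 = g6 w := y.2
      have : x = y := Subtype.ext (hx.trans hy.symm)
      exact this ▸ SimpleGraph.Reachable.refl _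
    · intro w₁ w₂ hw
      have hne : w₁ ≠ w₂ := by
        intro h
        exact (completeGraph (Fin 6)).irrefl (h ▸ hw)
      exact ⟨g6 w₁, g6 w₂, Function.partialInv_left hg6inj w₁,
        Function.partialInv_left hg6inj w₂, hg6adj _ _ hne⟩
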